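/- Let Σ be a finite signature, f a function symbol of arity k not in Σ, and ψ a case-1 regular clause over Σ ∪ {f} (i.e., ψ is a disjunction of equations and negated equations between (Σ∪{f})-terms without ITE, each equation contains at most one occurrence of f, and f occurs only in non-negated equations of ψ). Then the set {w ∈ T(Σ, {x1,…,xk}) : ψ{w/f} is valid} is a regular tree language over Σ ∪ {x1,…,xk} (with x1,…,xk treated as constants). -/

import Mathlib

namespace SyGuS

/-- Terms over a ranked alphabet: symbols `F`, each of arity `ar f`. -/
inductive Tm (F : Type) (ar : F → ℕ) : Type
  | app (f : F) (args : Fin (ar f) → Tm F ar) : Tm F ar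

/-- Arity function on `F ⊕ Fin k`: the `k` extra symbols are constants
(the variables `x₁,…,x_k`, treated as constants). -/
abbrev varAr {F : Type} (ar : F → ℕ) (k : ℕ) : F ⊕ Fin k → ℕ := Sum.elim ar fun _ => 0

/-- Arity function on `F ⊕ Unit`: the extra symbol is the function symbol `f` of arity `k`. -/
abbrev fAr {F : Type} (ar : F → ℕ) (k : ℕ) : F ⊕ Unit → ℕ := Sum.elim ar fun _ => k

/-- A (nonempty) first-order structure for the ranked alphabet `(F, ar)`. -/
structure Str (F : Type) (ar : F → ℕ) : Type 1 where
  D : Type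
  [nonemptyD : Nonempty D]
  interp : (f : F) → (Fin (ar f) → D) → D

attribute [instance] Str.nonemptyD

/-- Evaluation of a ground term in a structure. -/
def Tm.eval {F : Type} {ar : F → ℕ} (M : Str F ar) : Tm F ar → M.D
  | .app f args => M.interp f fun i => (args i).eval M

/-- First-order substitution: replace the variables `x₁,…,x_k` by terms. -/
def Tm.instVars {F : Type} {ar : F → ℕ} {k : ℕ} (σ : Fin k → Tm F ar) :
    Tm (F ⊕ Fin k) (varAr ar k) → Tm F ar
  | .app (Sum.inl g) args => .app g fun i => Tm.instVars σ (args i)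
  | .app (Sum.inr i) _ => σ i

/-- Second-order substitution `·{w/f}`: replace every application `f(s₁,…,s_k)` of the
distinguished symbol `f` by `w{s₁/x₁,…,s_k/x_k}`. -/
def Tm.soSubst {F : Type} {ar : F → ℕ} {k : ℕ} (w : Tm (F ⊕ Fin k) (varAr ar k)) :
    Tm (F ⊕ Unit) (fAr ar k) → Tm F ar
  | .app (Sum.inl g) args => .app g fun i => Tm.soSubst w (args i)
  | .app (Sum.inr _) args => Tm.instVars (fun i => Tm.soSubst w (args i)) w

/-- Renaming of symbols along an arity-preserving map. -/
def Tm.rename {F G : Type} {arF : F → ℕ} {arG : G → ℕ} (h : F → G)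
    (hh : ∀ f, arG (h f) = arF f) : Tm F arF → Tm G arG
  | .app f args => .app (h f) fun i => (args (Fin.cast (hh f) i)).rename h hh

/-- Equational consequence: `E ⊢ s = t` iff every structure satisfying all
equations of `E` also satisfies `s = t`. -/
def EqCons {F : Type} {ar : F → ℕ} (E : Set (Tm F ar × Tm F ar)) (s t : Tm F ar) : Prop :=
  ∀ M : Str F ar, (∀ e ∈ E, Tm.eval M e.1 = Tm.eval M e.2) → s.eval M = t.eval M

/-- Number of occurrences of the distinguished symbol `f` (the `Sum.inr` symbol) in a term. -/
def Tm.countF {F : Type} {ar : F → ℕ} {k : ℕ} : Tm (F ⊕ Unit) (fAr ar k) → ℕ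
  | .app (Sum.inl _) args => ∑ i, Tm.countF (args i)
  | .app (Sum.inr _) args => 1 + ∑ i, Tm.countF (args i)

/-- A literal: a (non-negated if `pos`, negated otherwise) equation between terms. -/
structure Lit (F : Type) (ar : F → ℕ) : Type where
  pos : Bool
  lhs : Tm F ar
  rhs : Tm F ar

def Lit.holds {F : Type} {ar : F → ℕ} (M : Str F ar) (l : Lit F ar) : Prop :=
  if l.pos then l.lhs.eval M = l.rhs.eval M else l.lhs.eval M ≠ l.rhs.eval M

/-- A clause: a disjunction of (possibly negated) equations, ITE-free by construction. -/
abbrev Clause (F : Type) (ar : F → ℕ) := List (Lit F ar)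

def Clause.holds {F : Type} {ar : F → ℕ} (M : Str F ar) (c : Clause F ar) : Prop :=
  ∃ l ∈ c, l.holds M

/-- A clause is valid if it holds in every nonempty structure. -/
def Clause.valid {F : Type} {ar : F → ℕ} (c : Clause F ar) : Prop :=
  ∀ M : Str F ar, c.holds M

/-- Number of occurrences of `f` in a literal (an equation). -/
def Lit.countF {F : Type} {ar : F → ℕ} {k : ℕ} (l : Lit (F ⊕ Unit) (fAr ar k)) : ℕ :=
  l.lhs.countF + l.rhs.countF

/-- Case-1 regular clause: every equation has at most one occurrence of `f`,
and `f` occurs only in non-negated equations. -/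
def Clause.Case1 {F : Type} {ar : F → ℕ} {k : ℕ} (c : Clause (F ⊕ Unit) (fAr ar k)) : Prop :=
  (∀ l ∈ c, l.countF ≤ 1) ∧ (∀ l ∈ c, l.pos = false → l.countF = 0)

/-- Case-2 regular clause: every equation has at most one occurrence of `f`, and `f`
occurs in exactly one negated equation of the clause and nowhere else. -/
def Clause.Case2 {F : Type} {ar : F → ℕ} {k : ℕ} (c : Clause (F ⊕ Unit) (fAr ar k)) : Prop :=
  (∀ l ∈ c, l.countF ≤ 1) ∧ (∀ l ∈ c, l.pos = true → l.countF = 0) ∧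
  (c.filter (fun l => l.pos = false ∧ l.countF ≠ 0)).length = 1

/-- A regular clause is one of case 1 or case 2. -/
def Clause.Regular {F : Type} {ar : F → ℕ} {k : ℕ} (c : Clause (F ⊕ Unit) (fAr ar k)) : Prop :=
  c.Case1 ∨ c.Case2

/-- Second-order substitution `·{w/f}` on literals. -/
def Lit.soSubst {F : Type} {ar : F → ℕ} {k : ℕ} (w : Tm (F ⊕ Fin k) (varAr ar k))
    (l : Lit (F ⊕ Unit) (fAr ar k)) : Lit F ar :=
  ⟨l.pos, Tm.soSubst w l.lhs, Tm.soSubst w l.rhs⟩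

/-- Second-order substitution `·{w/f}` on clauses. -/
def Clause.soSubst {F : Type} {ar : F → ℕ} {k : ℕ} (w : Tm (F ⊕ Fin k) (varAr ar k))
    (c : Clause (F ⊕ Unit) (fAr ar k)) : Clause F ar :=
  c.map (Lit.soSubst w)

/-- A regular-EUF formula: a finite conjunction of regular clauses. -/
structure RegEUF (F : Type) (ar : F → ℕ) (k : ℕ) : Type where
  clauses : List (Clause (F ⊕ Unit) (fAr ar k))
  regular : ∀ c ∈ clauses, c.Regular

/-- `w` is a solution for a regular-EUF formula if every clause becomes valid
after substituting `w` for `f`. -/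
def RegEUF.solves {F : Type} {ar : F → ℕ} {k : ℕ} (φ : RegEUF F ar k)
    (w : Tm (F ⊕ Fin k) (varAr ar k)) : Prop :=
  ∀ c ∈ φ.clauses, (c.soSubst w).valid

/-- Deterministic bottom-up tree automaton with a partial transition function. -/
structure DTA (F : Type) (ar : F → ℕ) : Type 1 where
  Q : Type
  [fintypeQ : Fintype Q]
  δ : (f : F) → (Fin (ar f) → Q) → Option Q
  final : Set Q

attribute [instance] DTA.fintypeQ

/-- Sequence a finite tuple of options. -/
def finSeq {Q : Type} : {n : ℕ} → (Fin n → Option Q) → Option (Fin n → Q)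
  | 0, _ => some (fun i => i.elim0)
  | _ + 1, f => (f 0).bind fun q => (finSeq fun i => f i.succ).map (Fin.cons q)

/-- The (partial) run of the automaton on a term: `δ` extended to terms. -/
def DTA.run {F : Type} {ar : F → ℕ} (A : DTA F ar) : Tm F ar → Option A.Q
  | .app f args => (finSeq fun i => A.run (args i)).bind fun qs => A.δ f qs

/-- The language accepted by the automaton. -/
def DTA.lang {F : Type} {ar : F → ℕ} (A : DTA F ar) : Set (Tm F ar) :=
  { t | ∃ q ∈ A.final, A.run t = some q }

/-- A tree language is regular if it is the language of some deterministic
bottom-up tree automaton. -/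
def IsRegularTreeLang {F : Type} {ar : F → ℕ} (L : Set (Tm F ar)) : Prop :=
  ∃ A : DTA F ar, L = A.lang


/-! ### Auxiliary development -/

section Aux

variable {F : Type} {ar : F → ℕ} {k : ℕ}

theorem EqCons.refl' (E : Set (Tm F ar × Tm F ar)) (t : Tm F ar) : EqCons E t t :=
  fun _ _ => rfl

theorem EqCons.symm' {E : Set (Tm F ar × Tm F ar)} {s t : Tm F ar} (h : EqCons E s t) :
    EqCons E t s := fun M hM => (h M hM).symm

theorem EqCons.trans' {E : Set (Tm F ar × Tm F ar)} {s t u : Tm F ar}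
    (h1 : EqCons E s t) (h2 : EqCons E t u) : EqCons E s u :=
  fun M hM => (h1 M hM).trans (h2 M hM)

theorem EqCons.congrApp {E : Set (Tm F ar × Tm F ar)} (g : F) {a b : Fin (ar g) → Tm F ar}
    (h : ∀ i, EqCons E (a i) (b i)) : EqCons E (.app g a) (.app g b) := fun M hM => by
  show M.interp g _ = M.interp g _
  exact congrArg _ (funext fun i => h i M hM)

/-- The set of subterms of a term. -/
def Tm.subts : Tm F ar → Set (Tm F ar)
  | .app g args => insert (.app g args) (⋃ i, (args i).subts)

theorem Tm.self_mem_subts : ∀ t : Tm F ar, t ∈ t.subts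
  | .app _ _ => Set.mem_insert _ _

theorem Tm.subts_finite : ∀ t : Tm F ar, t.subts.Finite
  | .app _ args => ((Set.finite_iUnion fun i => (args i).subts_finite).insert _)

theorem Tm.subts_sub {g : F} {args : Fin (ar g) → Tm F ar} (i : Fin (ar g)) :
    (args i).subts ⊆ (Tm.app g args).subts := fun x hx =>
  Set.mem_insert_iff.mpr (Or.inr (Set.mem_iUnion.mpr ⟨i, hx⟩))

theorem finSeq_some {Q : Type} : ∀ {n : ℕ} (v : Fin n → Q),
    finSeq (fun i => some (v i)) = some v := by
  intro n
  induction n with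
  | zero =>
    intro v
    simp only [finSeq]
    exact congrArg some (funext fun i => i.elim0)
  | succ n ih =>
    intro v
    simp only [finSeq, Option.bind_some, ih fun i => v i.succ, Option.map_some]
    exact congrArg some (Fin.cons_self_tail v)

theorem finSeq_eq_some {Q : Type} : ∀ {n : ℕ} {f : Fin n → Option Q} {v : Fin n → Q},
    finSeq f = some v → ∀ i, f i = some (v i) := by
  intro n
  induction n with
  | zero => intro f v h i; exact i.elim0
  | succ n ih =>
    intro f v h i
    rw [finSeq] at h
    cases h0 : f 0 with
    | none => rw [h0] at h; simp at h
    | some q =>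
      rw [h0] at h
      simp only [Option.bind_some] at h
      obtain ⟨vt, hvt, hcons⟩ := Option.map_eq_some_iff.mp h
      subst hcons
      refine Fin.cases ?_ ?_ i
      · simpa using h0
      · intro j; simpa [Fin.cons_succ] using ih hvt j

/-- First defined value of a finite family of options. -/
def firstSome {Q : Type} : {n : ℕ} → (Fin n → Option Q) → Option Q
  | 0, _ => none
  | _ + 1, f =>
    match f 0 with
    | some x => some x
    | none => firstSome fun i => f i.succ

theorem firstSome_none {Q : Type} : ∀ {n : ℕ} {f : Fin n → Option Q},
    (∀ i, f i = none) → firstSome f = none := by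
  intro n
  induction n with
  | zero => intro f _; rfl
  | succ n ih =>
    intro f h
    rw [firstSome, h 0]
    exact ih fun i => h i.succ

theorem firstSome_eq {Q : Type} : ∀ {n : ℕ} {f : Fin n → Option Q} (i₀ : Fin n),
    (∀ i, i ≠ i₀ → f i = none) → firstSome f = f i₀ := by
  intro n
  induction n with
  | zero => intro f i₀; exact i₀.elim0
  | succ n ih =>
    intro f i₀ h
    revert h
    refine Fin.cases ?_ ?_ i₀ <;> clear i₀
    · intro h
      rw [firstSome]
      cases h0 : f 0 with
      | some x => rfl
      | none => rw [firstSome_none fun i => h i.succ (by simp [Fin.succ_ne_zero])]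
    · intro j h
      rw [firstSome, h 0 (Ne.symm (Fin.succ_ne_zero j))]
      exact ih j fun i hi => h i.succ (by simpa [Fin.succ_inj] using hi)

theorem sum_eq_one_aux {n : ℕ} {f : Fin n → ℕ} (h : ∑ i, f i = 1) :
    ∃ i₀, f i₀ = 1 ∧ ∀ i, i ≠ i₀ → f i = 0 := by
  obtain ⟨i₀, -, hi₀⟩ := Finset.exists_ne_zero_of_sum_ne_zero (by omega : ∑ i, f i ≠ 0)
  have h2 := Finset.add_sum_erase Finset.univ f (Finset.mem_univ i₀)
  rw [h] at h2
  have hrest : ∑ x ∈ Finset.univ.erase i₀, f x = 0 := by omega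
  exact ⟨i₀, by omega, fun i hi =>
    Finset.sum_eq_zero_iff.mp hrest i (Finset.mem_erase.mpr ⟨hi, Finset.mem_univ i⟩)⟩

/-- Erase a term containing no `f` to an `F`-term (`none` if it contains `f`). -/
def Tm.erF : Tm (F ⊕ Unit) (fAr ar k) → Option (Tm F ar)
  | .app (Sum.inl g) args => (finSeq fun i => Tm.erF (args i)).map fun as => Tm.app g as
  | .app (Sum.inr _) _ => none

/-- The (erased) arguments of the first occurrence of `f` in a term. -/
def Tm.fargsEr : Tm (F ⊕ Unit) (fAr ar k) → Option (Fin k → Tm F ar)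
  | .app (Sum.inl g) args => firstSome fun i => Tm.fargsEr (args i)
  | .app (Sum.inr _) args => finSeq fun i => Tm.erF (args i)

/-- Evaluation of a term with at most one occurrence of `f`, where the value at the
`f`-occurrence is replaced by `v`. -/
def hEval (M : Str F ar) (v : M.D) : Tm (F ⊕ Unit) (fAr ar k) → M.D
  | .app (Sum.inl g) args => M.interp g fun i => hEval M v (args i)
  | .app (Sum.inr _) _ => v

theorem Tm.erF_some_countF : ∀ {t : Tm (F ⊕ Unit) (fAr ar k)} {p : Tm F ar},
    t.erF = some p → t.countF = 0 := by
  intro t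
  induction t with
  | app g args ih =>
    cases g with
    | inl g =>
      intro p h
      rw [Tm.erF] at h
      obtain ⟨as, has, -⟩ := Option.map_eq_some_iff.mp h
      simp only [Tm.countF]
      exact Finset.sum_eq_zero fun i _ => ih i (finSeq_eq_some has i)
    | inr u => intro p h; exact absurd h (by simp [Tm.erF])

theorem Tm.countF_zero_erF : ∀ {t : Tm (F ⊕ Unit) (fAr ar k)}, t.countF = 0 →
    ∃ p, t.erF = some p ∧ ∀ w : Tm (F ⊕ Fin k) (varAr ar k), Tm.soSubst w t = p := by
  intro t
  induction t with
  | app g args ih =>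
    cases g with
    | inl g =>
      intro h
      simp only [Tm.countF] at h
      have h0 : ∀ i, (args i).countF = 0 :=
        fun i => Finset.sum_eq_zero_iff.mp h i (Finset.mem_univ i)
      choose p hp hw using fun i => ih i (h0 i)
      refine ⟨.app g p, ?_, ?_⟩
      · rw [Tm.erF, show (fun i => (args i).erF) = fun i => some (p i) from funext hp,
          finSeq_some]
        rfl
      · intro w
        rw [Tm.soSubst]
        exact congrArg _ (funext fun i => hw i w)
    | inr u => intro h; simp [Tm.countF] at h

theorem Tm.erF_eq_some {t : Tm (F ⊕ Unit) (fAr ar k)} {p : Tm F ar} (h : t.erF = some p)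
    (w : Tm (F ⊕ Fin k) (varAr ar k)) : Tm.soSubst w t = p := by
  obtain ⟨p', hp', hw⟩ := Tm.countF_zero_erF (Tm.erF_some_countF h)
  rw [hp'] at h
  cases h
  exact hw w

theorem Tm.erF_none_countF {t : Tm (F ⊕ Unit) (fAr ar k)} (h : t.erF = none) :
    t.countF ≠ 0 := by
  intro h0
  obtain ⟨p, hp, -⟩ := Tm.countF_zero_erF h0
  rw [h] at hp
  cases hp

theorem Tm.countF_ne_zero_erF {t : Tm (F ⊕ Unit) (fAr ar k)} (h : t.countF ≠ 0) :
    t.erF = none := by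
  cases hp : t.erF with
  | none => rfl
  | some p => exact absurd (Tm.erF_some_countF hp) h

theorem Tm.fargsEr_none : ∀ {t : Tm (F ⊕ Unit) (fAr ar k)}, t.countF = 0 →
    t.fargsEr = none := by
  intro t
  induction t with
  | app g args ih =>
    cases g with
    | inl g =>
      intro h
      simp only [Tm.countF] at h
      exact firstSome_none fun i => ih i (Finset.sum_eq_zero_iff.mp h i (Finset.mem_univ i))
    | inr u => intro h; simp [Tm.countF] at h

theorem hEval_countF_zero : ∀ {t : Tm (F ⊕ Unit) (fAr ar k)}, t.countF = 0 →
    ∀ (M : Str F ar) (v : M.D) (w : Tm (F ⊕ Fin k) (varAr ar k)),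
      Tm.eval M (Tm.soSubst w t) = hEval M v t := by
  intro t
  induction t with
  | app g args ih =>
    cases g with
    | inl g =>
      intro h M v w
      simp only [Tm.countF] at h
      rw [Tm.soSubst, hEval]
      show M.interp g _ = M.interp g _
      exact congrArg _ (funext fun i =>
        ih i (Finset.sum_eq_zero_iff.mp h i (Finset.mem_univ i)) M v w)
    | inr u => intro h; simp [Tm.countF] at h

theorem Tm.decomp : ∀ {t : Tm (F ⊕ Unit) (fAr ar k)}, t.countF = 1 →
    ∃ σ : Fin k → Tm F ar, t.fargsEr = some σ ∧
      ∀ (M : Str F ar) (w : Tm (F ⊕ Fin k) (varAr ar k)),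
        Tm.eval M (Tm.soSubst w t) = hEval M (Tm.eval M (Tm.instVars σ w)) t := by
  intro t
  induction t with
  | app g args ih =>
    cases g with
    | inl g =>
      intro h
      simp only [Tm.countF] at h
      obtain ⟨i₀, hi₀, hrest⟩ := sum_eq_one_aux h
      obtain ⟨σ, hσ, hdec⟩ := ih i₀ hi₀
      refine ⟨σ, ?_, ?_⟩
      · rw [Tm.fargsEr, firstSome_eq i₀ fun i hi => Tm.fargsEr_none (hrest i hi)]
        exact hσ
      · intro M w
        rw [Tm.soSubst, hEval]
        show M.interp g _ = M.interp g _
        refine congrArg _ (funext fun i => ?_)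
        by_cases hi : i = i₀
        · subst hi; exact hdec M w
        · exact hEval_countF_zero (hrest i hi) M _ w
    | inr u =>
      intro h
      simp only [Tm.countF] at h
      have h0 : ∀ i, (args i).countF = 0 := by
        intro i
        have : ∑ i, (args i).countF = 0 := by omega
        exact Finset.sum_eq_zero_iff.mp this i (Finset.mem_univ i)
      choose p hp hw using fun i => Tm.countF_zero_erF (h0 i)
      have hfs : (finSeq fun i => Tm.erF (args i)) = some p := by
        have h2 := finSeq_some p
        rwa [show (fun i => some (p i)) = fun i => (args i).erF from
          funext fun i => (hp i).symm] at h2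
      refine ⟨p, ?_, ?_⟩
      · rw [Tm.fargsEr]; exact hfs
      · intro M w
        rw [Tm.soSubst, hEval]
        exact congrArg (fun σ => Tm.eval M (Tm.instVars σ w)) (funext fun i => hw i w)

/-! ### The finite quotient model -/

section Model

variable (E : Set (Tm F ar × Tm F ar)) (S : Set (Tm F ar))

/-- The setoid on `S`: provable equality from `E`. -/
def estd : Setoid ↥S :=
  ⟨fun a b => EqCons E a.val b.val,
   ⟨fun a => EqCons.refl' E a.val, fun h => h.symm', fun h1 h2 => h1.trans' h2⟩⟩

open Classical in
/-- The interpretation of the finite quotient model. -/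
noncomputable def interpS (g : F) (ds : Fin (ar g) → Option (Quotient (estd E S))) :
    Option (Quotient (estd E S)) :=
  if h : ∃ (us : Fin (ar g) → ↥S) (v : ↥S), (∀ i, ds i = some (Quotient.mk (estd E S) (us i)))
      ∧ EqCons E (.app g fun i => (us i).val) v.val
  then some (Quotient.mk (estd E S) h.choose_spec.choose) else none

/-- The finite quotient model. -/
noncomputable def MS : Str F ar where
  D := Option (Quotient (estd E S))
  nonemptyD := ⟨none⟩
  interp := interpS E S

variable {E S}

theorem interpS_eq {g : F} {ds : Fin (ar g) → Option (Quotient (estd E S))}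
    (us : Fin (ar g) → ↥S) (v : ↥S)
    (hds : ∀ i, ds i = some (Quotient.mk (estd E S) (us i)))
    (hv : EqCons E (.app g fun i => (us i).val) v.val) :
    interpS E S g ds = some (Quotient.mk (estd E S) v) := by
  have h : ∃ (us : Fin (ar g) → ↥S) (v : ↥S),
      (∀ i, ds i = some (Quotient.mk (estd E S) (us i)))
      ∧ EqCons E (.app g fun i => (us i).val) v.val := ⟨us, v, hds, hv⟩
  rw [interpS, dif_pos h]
  refine congrArg some (Quotient.sound ?_)
  obtain ⟨h1, h2⟩ := h.choose_spec.choose_spec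
  have hus : ∀ i, EqCons E (h.choose i).val (us i).val := fun i =>
    Quotient.exact (Option.some.inj ((h1 i).symm.trans (hds i)))
  exact (h2.symm'.trans' (EqCons.congrApp g hus)).trans' hv

theorem interpS_some {g : F} {ds : Fin (ar g) → Option (Quotient (estd E S))}
    {c : Quotient (estd E S)} (h : interpS E S g ds = some c) :
    ∃ (us : Fin (ar g) → ↥S) (v : ↥S), (∀ i, ds i = some (Quotient.mk (estd E S) (us i)))
      ∧ EqCons E (.app g fun i => (us i).val) v.val ∧ c = Quotient.mk (estd E S) v := by
  rw [interpS] at h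
  split at h
  · next hex =>
    exact ⟨hex.choose, hex.choose_spec.choose, hex.choose_spec.choose_spec.1,
      hex.choose_spec.choose_spec.2, (Option.some.inj h).symm⟩
  · exact absurd h (by simp)

theorem eval_MS : ∀ {t : Tm F ar} (ht : t.subts ⊆ S),
    Tm.eval (MS E S) t = some (Quotient.mk (estd E S) ⟨t, ht (Tm.self_mem_subts t)⟩) := by
  intro t
  induction t with
  | app g args ih =>
    intro ht
    have hargs : ∀ i, (args i).subts ⊆ S := fun i => (Tm.subts_sub i).trans ht
    show interpS E S g (fun i => Tm.eval (MS E S) (args i)) = _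
    refine interpS_eq (fun i => ⟨args i, (hargs i) (Tm.self_mem_subts (args i))⟩)
      ⟨.app g args, ht (Tm.self_mem_subts _)⟩ (fun i => ih i (hargs i)) ?_
    exact EqCons.refl' E _

theorem eqcons_of_eval_MS : ∀ {t : Tm F ar} (v : ↥S),
    Tm.eval (MS E S) t = some (Quotient.mk (estd E S) v) → EqCons E t v.val := by
  intro t
  induction t with
  | app g args ih =>
    intro v h
    have h' : interpS E S g (fun i => Tm.eval (MS E S) (args i)) = some (Quotient.mk (estd E S) v) := h
    obtain ⟨us, v', h1, h2, h3⟩ := interpS_some h'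
    have hargs : ∀ i, EqCons E (args i) (us i).val := fun i => ih i (us i) (h1 i)
    have hvv' : EqCons E v'.val v.val :=
      EqCons.symm' (Quotient.exact h3 : EqCons E v.val v'.val)
    exact ((EqCons.congrApp g hargs).trans' h2).trans' hvv'

end Model

/-! ### The clause data and automaton -/

section ClauseModel

variable (ψ : Clause (F ⊕ Unit) (fAr ar k))

/-- The ground equations coming from the negative literals of the clause. -/
def clE : Set (Tm F ar × Tm F ar) :=
  {e | ∃ l ∈ ψ, l.pos = false ∧ l.lhs.erF = some e.1 ∧ l.rhs.erF = some e.2}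

/-- Subterms of the erasure of a term. -/
def erSet (t : Tm (F ⊕ Unit) (fAr ar k)) : Set (Tm F ar) :=
  {u | ∃ p, t.erF = some p ∧ u ∈ p.subts}

theorem erSet_finite (t : Tm (F ⊕ Unit) (fAr ar k)) : (erSet t).Finite := by
  cases h : t.erF with
  | none => convert Set.finite_empty; ext u; simp [erSet, h]
  | some p =>
    have : erSet t = p.subts := by ext u; simp [erSet, h]
    rw [this]; exact p.subts_finite

theorem subts_sub_erSet {t : Tm (F ⊕ Unit) (fAr ar k)} {p : Tm F ar} (h : t.erF = some p) :
    p.subts ⊆ erSet t := fun x hx => ⟨p, h, hx⟩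

/-- All subterms of erasures of sides of literals of the clause. -/
def clS : Set (Tm F ar) := ⋃ l ∈ {x | x ∈ ψ}, (erSet l.lhs ∪ erSet l.rhs)

theorem clS_finite : (clS ψ).Finite :=
  Set.Finite.biUnion (ψ.finite_toSet) fun _ _ => ((erSet_finite _).union (erSet_finite _))

theorem subts_sub_clS {l : Lit (F ⊕ Unit) (fAr ar k)} (hl : l ∈ ψ) {p : Tm F ar}
    (h : l.lhs.erF = some p ∨ l.rhs.erF = some p) : p.subts ⊆ clS ψ := fun x hx =>
  Set.mem_biUnion hl (by
    rcases h with h | h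
    · exact (Set.mem_union _ _ _).mpr (Or.inl ⟨p, h, hx⟩)
    · exact (Set.mem_union _ _ _).mpr (Or.inr ⟨p, h, hx⟩))

/-- The per-literal variable instantiation: the erased arguments of the unique
occurrence of `f` in the literal, if any. -/
def clσ (j : Fin ψ.length) : Option (Fin k → Tm F ar) :=
  (ψ.get j).lhs.fargsEr <|> (ψ.get j).rhs.fargsEr

/-- Acceptance condition for a single (positive) literal, given the state component. -/
def clOK (j : Fin ψ.length) (v : Option (Quotient (estd (clE ψ) (clS ψ)))) : Prop :=
  (∃ p q, (ψ.get j).lhs.erF = some p ∧ (ψ.get j).rhs.erF = some q ∧ EqCons (clE ψ) p q)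
  ∨ ((ψ.get j).lhs.erF = none ∧ ∃ q, (ψ.get j).rhs.erF = some q ∧
      hEval (MS (clE ψ) (clS ψ)) v (ψ.get j).lhs = Tm.eval (MS (clE ψ) (clS ψ)) q)
  ∨ ((ψ.get j).rhs.erF = none ∧ ∃ p, (ψ.get j).lhs.erF = some p ∧
      Tm.eval (MS (clE ψ) (clS ψ)) p = hEval (MS (clE ψ) (clS ψ)) v (ψ.get j).rhs)

/-- Default state component for the variable `xᵢ`. -/
noncomputable def clDflt (j : Fin ψ.length) (i : Fin k) :
    Option (Quotient (estd (clE ψ) (clS ψ))) :=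
  match clσ ψ j with
  | some σ => Tm.eval (MS (clE ψ) (clS ψ)) (σ i)
  | none => none

theorem clDflt_eq {j : Fin ψ.length} {σ : Fin k → Tm F ar} (h : clσ ψ j = some σ)
    (i : Fin k) : clDflt ψ j i = Tm.eval (MS (clE ψ) (clS ψ)) (σ i) := by
  rw [clDflt, h]

/-- Transition function of the automaton. -/
noncomputable def clδ : (g : F ⊕ Fin k) →
    (Fin (varAr ar k g) → (Fin ψ.length → Option (Quotient (estd (clE ψ) (clS ψ))))) →
    Option (Fin ψ.length → Option (Quotient (estd (clE ψ) (clS ψ))))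
  | Sum.inl g, qs => some fun j => interpS (clE ψ) (clS ψ) g fun i => qs i j
  | Sum.inr i, _ => some fun j => clDflt ψ j i

/-- The automaton recognizing the solutions of a case-1 clause. -/
noncomputable def clA : DTA (F ⊕ Fin k) (varAr ar k) where
  Q := Fin ψ.length → Option (Quotient (estd (clE ψ) (clS ψ)))
  fintypeQ := by
    haveI : Finite ↥(clS ψ) := (clS_finite ψ).to_subtype
    haveI := Fintype.ofFinite (Quotient (estd (clE ψ) (clS ψ)))
    exact inferInstance
  δ := clδ ψ
  final := {st | ∃ j, (ψ.get j).pos = true ∧ clOK ψ j (st j)}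

theorem clA_run_isSome : ∀ w : Tm (F ⊕ Fin k) (varAr ar k), ∃ st, (clA ψ).run w = some st := by
  intro w
  induction w with
  | app s args ih =>
    choose sts hsts using ih
    rw [DTA.run, show (fun i => (clA ψ).run (args i)) = fun i => some (sts i) from funext hsts,
      finSeq_some]
    cases s with
    | inl g => exact ⟨_, rfl⟩
    | inr i => exact ⟨_, rfl⟩

theorem clA_run_spec : ∀ (w : Tm (F ⊕ Fin k) (varAr ar k))
    (st : Fin ψ.length → Option (Quotient (estd (clE ψ) (clS ψ)))),
    (clA ψ).run w = some st →
    ∀ (j : Fin ψ.length) (σ : Fin k → Tm F ar), clσ ψ j = some σ →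
      st j = Tm.eval (MS (clE ψ) (clS ψ)) (Tm.instVars σ w) := by
  intro w
  induction w with
  | app s args ih =>
    intro st h j σ hσ
    rw [DTA.run] at h
    cases hfs : finSeq fun i => (clA ψ).run (args i) with
    | none => rw [hfs] at h; simp at h
    | some qs =>
      rw [hfs] at h
      simp only [Option.bind_some] at h
      cases s with
      | inl g =>
        have hst : st = fun j => interpS (clE ψ) (clS ψ) g fun i => qs i j :=
          (Option.some.inj h).symm
        rw [hst]
        show interpS (clE ψ) (clS ψ) g (fun i => qs i j) = _
        have hq : ∀ i, qs i j = Tm.eval (MS (clE ψ) (clS ψ)) (Tm.instVars σ (args i)) :=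
          fun i => ih i (qs i) (finSeq_eq_some hfs i) j σ hσ
        exact congrArg (interpS (clE ψ) (clS ψ) g) (funext hq)
      | inr i =>
        have hst : st = fun j => clDflt ψ j i := (Option.some.inj h).symm
        rw [hst]
        show clDflt ψ j i = _
        rw [clDflt_eq ψ hσ i]
        rfl

theorem clM_models : ∀ e ∈ clE ψ, Tm.eval (MS (clE ψ) (clS ψ)) e.1
    = Tm.eval (MS (clE ψ) (clS ψ)) e.2 := by
  rintro ⟨p, q⟩ ⟨l, hl, hpos, hp, hq⟩
  have hps : p.subts ⊆ clS ψ := subts_sub_clS ψ hl (Or.inl hp)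
  have hqs : q.subts ⊆ clS ψ := subts_sub_clS ψ hl (Or.inr hq)
  rw [eval_MS hps, eval_MS hqs]
  exact congrArg some (Quotient.sound fun M hM => hM (p, q) ⟨l, hl, hpos, hp, hq⟩)

end ClauseModel

end Aux

/-- For a finite signature `Σ = (F, ar)`, a fresh function symbol `f`
of arity `k`, and a case-1 regular clause (each equation contains at most one occurrence of `f`, and `f` occurs only in non-negated equations), the set of candidate expressions
`w ∈ T(Σ, {x₁,…,x_k})` such that `ψ{w/f}` is valid is a regular tree language over
`Σ ∪ {x₁,…,x_k}` (with the variables treated as constants). -/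
theorem case1_solutions_regular {F : Type} [Fintype F] (ar : F → ℕ) (k : ℕ)
    (ψ : Clause (F ⊕ Unit) (fAr ar k)) (hψ : ψ.Case1) :
    IsRegularTreeLang {w : Tm (F ⊕ Fin k) (varAr ar k) | (ψ.soSubst w).valid} := by
  classical
  obtain ⟨h1, h2⟩ := hψ
  refine ⟨clA ψ, ?_⟩
  ext w
  obtain ⟨st, hst⟩ := clA_run_isSome ψ w
  simp only [Set.mem_setOf_eq, DTA.lang]
  constructor
  · -- valid → accepted
    intro hval
    refine ⟨st, ?_, hst⟩
    obtain ⟨l', hl', hh⟩ := hval (MS (clE ψ) (clS ψ))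
    obtain ⟨l, hl, rfl⟩ := List.mem_map.mp hl'
    have hpos : l.pos = true := by
      by_contra hp
      have hp' : l.pos = false := by revert hp; cases l.pos <;> simp
      have hc : l.countF = 0 := h2 l hl hp'
      have hc1 : l.lhs.countF = 0 := by simp only [Lit.countF] at hc; omega
      have hc2 : l.rhs.countF = 0 := by simp only [Lit.countF] at hc; omega
      obtain ⟨p, hpe, hpw⟩ := Tm.countF_zero_erF hc1
      obtain ⟨q, hqe, hqw⟩ := Tm.countF_zero_erF hc2
      have hmem : ((p, q) : Tm F ar × Tm F ar) ∈ clE ψ := ⟨l, hl, hp', hpe, hqe⟩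
      have heq := clM_models ψ (p, q) hmem
      simp only [Lit.holds, Lit.soSubst, hp', Bool.false_eq_true, if_false] at hh
      rw [hpw w, hqw w] at hh
      exact hh heq
    obtain ⟨jv, hjl⟩ := List.mem_iff_get.mp hl
    refine ⟨jv, by rw [hjl]; exact hpos, ?_⟩
    simp only [Lit.holds, Lit.soSubst, hpos, if_true] at hh
    have hsum : l.lhs.countF + l.rhs.countF ≤ 1 := by
      simpa only [Lit.countF] using h1 l hl
    simp only [clOK]
    rcases Nat.lt_or_ge l.lhs.countF 1 with hc1 | hc1
    · have hc1 : l.lhs.countF = 0 := by omega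
      obtain ⟨p, hpe, hpw⟩ := Tm.countF_zero_erF hc1
      rcases Nat.lt_or_ge l.rhs.countF 1 with hc2 | hc2
      · have hc2 : l.rhs.countF = 0 := by omega
        obtain ⟨q, hqe, hqw⟩ := Tm.countF_zero_erF hc2
        refine Or.inl ⟨p, q, by rw [hjl]; exact hpe, by rw [hjl]; exact hqe, ?_⟩
        rw [hpw w, hqw w] at hh
        have hqS : q.subts ⊆ clS ψ := subts_sub_clS ψ hl (Or.inr hqe)
        rw [eval_MS hqS] at hh
        exact eqcons_of_eval_MS _ hh
      · have hc2 : l.rhs.countF = 1 := by omega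
        obtain ⟨σ, hσe, hdec⟩ := Tm.decomp hc2
        have hclσ : clσ ψ jv = some σ := by
          simp only [clσ]; rw [hjl, Tm.fargsEr_none hc1, hσe]; rfl
        have hstj : st jv = Tm.eval (MS (clE ψ) (clS ψ)) (Tm.instVars σ w) :=
          clA_run_spec ψ w st hst jv σ hclσ
        refine Or.inr (Or.inr ⟨by rw [hjl]; exact Tm.countF_ne_zero_erF (by omega),
          p, by rw [hjl]; exact hpe, ?_⟩)
        rw [hjl, hstj, ← hdec (MS (clE ψ) (clS ψ)) w, ← hh, hpw w]
    · have hc1 : l.lhs.countF = 1 := by omega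
      have hc2 : l.rhs.countF = 0 := by omega
      obtain ⟨q, hqe, hqw⟩ := Tm.countF_zero_erF hc2
      obtain ⟨σ, hσe, hdec⟩ := Tm.decomp hc1
      have hclσ : clσ ψ jv = some σ := by simp only [clσ]; rw [hjl, hσe]; rfl
      have hstj : st jv = Tm.eval (MS (clE ψ) (clS ψ)) (Tm.instVars σ w) :=
        clA_run_spec ψ w st hst jv σ hclσ
      refine Or.inr (Or.inl ⟨by rw [hjl]; exact Tm.countF_ne_zero_erF (by omega),
        q, by rw [hjl]; exact hqe, ?_⟩)
      rw [hjl, hstj, ← hdec (MS (clE ψ) (clS ψ)) w, hh, hqw w]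
  · -- accepted → valid
    rintro ⟨q, ⟨jv, hpos, hOK⟩, hrun⟩
    have hq : q = st := by rw [hst] at hrun; exact (Option.some.inj hrun).symm
    rw [hq] at hOK
    have hlmem : ψ.get jv ∈ ψ := List.mem_iff_get.mpr ⟨jv, rfl⟩
    intro M
    by_cases hM : ∀ e ∈ clE ψ, Tm.eval M e.1 = Tm.eval M e.2
    · refine ⟨Lit.soSubst w (ψ.get jv), List.mem_map_of_mem hlmem, ?_⟩
      simp only [Lit.holds, Lit.soSubst, hpos, if_true]
      simp only [clOK] at hOK
      rcases hOK with ⟨p, q', hpe, hqe, hpq⟩ | ⟨hnone, q', hqe, heq⟩ | ⟨hnone, p, hpe, heq⟩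
      · rw [Tm.erF_eq_some hpe w, Tm.erF_eq_some hqe w]
        exact hpq M hM
      · have hsum : (ψ.get jv).lhs.countF + (ψ.get jv).rhs.countF ≤ 1 := by
          simpa only [Lit.countF] using h1 _ hlmem
        have hc1 : (ψ.get jv).lhs.countF = 1 := by
          have := Tm.erF_none_countF hnone; omega
        obtain ⟨σ, hσe, hdec⟩ := Tm.decomp hc1
        have hclσ : clσ ψ jv = some σ := by simp only [clσ]; rw [hσe]; rfl
        have hstj : st jv = Tm.eval (MS (clE ψ) (clS ψ)) (Tm.instVars σ w) :=
          clA_run_spec ψ w st hst jv σ hclσ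
        have hkey : Tm.eval (MS (clE ψ) (clS ψ)) (Tm.soSubst w (ψ.get jv).lhs)
            = Tm.eval (MS (clE ψ) (clS ψ)) q' := by
          rw [hdec _ w, ← hstj]; exact heq
        have hq'S : q'.subts ⊆ clS ψ := subts_sub_clS ψ hlmem (Or.inr hqe)
        rw [eval_MS hq'S] at hkey
        have hEC := eqcons_of_eval_MS _ hkey
        rw [Tm.erF_eq_some hqe w]
        exact hEC M hM
      · have hsum : (ψ.get jv).lhs.countF + (ψ.get jv).rhs.countF ≤ 1 := by
          simpa only [Lit.countF] using h1 _ hlmem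
        have hc2 : (ψ.get jv).rhs.countF = 1 := by
          have := Tm.erF_none_countF hnone; omega
        have hc1 : (ψ.get jv).lhs.countF = 0 := by omega
        obtain ⟨σ, hσe, hdec⟩ := Tm.decomp hc2
        have hclσ : clσ ψ jv = some σ := by
          simp only [clσ]; rw [Tm.fargsEr_none hc1, hσe]; rfl
        have hstj : st jv = Tm.eval (MS (clE ψ) (clS ψ)) (Tm.instVars σ w) :=
          clA_run_spec ψ w st hst jv σ hclσ
        have hkey : Tm.eval (MS (clE ψ) (clS ψ)) (Tm.soSubst w (ψ.get jv).rhs)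
            = Tm.eval (MS (clE ψ) (clS ψ)) p := by
          rw [hdec _ w, ← hstj]; exact heq.symm
        have hpS : p.subts ⊆ clS ψ := subts_sub_clS ψ hlmem (Or.inl hpe)
        rw [eval_MS hpS] at hkey
        have hEC := eqcons_of_eval_MS _ hkey
        rw [Tm.erF_eq_some hpe w]
        exact (hEC M hM).symm
    · push_neg at hM
      obtain ⟨e, he, hne⟩ := hM
      obtain ⟨l0, hl0, hp0, hpe0, hqe0⟩ := he
      refine ⟨Lit.soSubst w l0, List.mem_map_of_mem hl0, ?_⟩
      simp only [Lit.holds, Lit.soSubst, hp0, Bool.false_eq_true, if_false]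
      rw [Tm.erF_eq_some hpe0 w, Tm.erF_eq_some hqe0 w]
      exact hne

end SyGuS
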